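/- Every P-ring is perinormal: if A is a Marot ring such that A_(P) is a Manis valuation ring of the total quotient ring for every prime P minimal over an ideal (bA : a) with a ∈ A and b regular, then every overring B of A with going down for A ⊆ B is flat as an A-module. -/

import Mathlib

/-- A Marot ring: regular ideals are generated by their regular elements. -/
def IsMarot (A : Type*) [CommRing A] : Prop :=
  ∀ I : Ideal A, (∃ r ∈ I, r ∈ nonZeroDivisors A) →
    I = Ideal.span {r : A | r ∈ I ∧ r ∈ nonZeroDivisors A}

/-- The underlying set of the regular quotient ring. -/
def rqSet {R K : Type*} [CommRing R] [CommRing K] (f : R →+* K) (P : Ideal R) : Set K :=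
  {x | ∃ a s : R, s ∈ nonZeroDivisors R ∧ s ∉ P ∧ x * f s = f a}

/-- The regular quotient ring at a prime, as a subring of K. -/
def rqSub {R K : Type*} [CommRing R] [CommRing K] (f : R →+* K) (P : Ideal R)
    (hP : P.IsPrime) : Subring K where
  carrier := rqSet f P
  one_mem' := ⟨1, 1, Submonoid.one_mem _, fun h => hP.ne_top (P.eq_top_iff_one.mpr h), by simp⟩
  zero_mem' := ⟨0, 1, Submonoid.one_mem _, fun h => hP.ne_top (P.eq_top_iff_one.mpr h), by simp⟩
  mul_mem' := by
    rintro x y ⟨a, s, hs, hsP, hx⟩ ⟨b, t, ht, htP, hy⟩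
    refine ⟨a * b, s * t, mul_mem hs ht, fun h => ((hP.mem_or_mem h).elim hsP htP), ?_⟩
    rw [map_mul, map_mul]
    calc x * y * (f s * f t) = (x * f s) * (y * f t) := by ring
    _ = f a * f b := by rw [hx, hy]
  add_mem' := by
    rintro x y ⟨a, s, hs, hsP, hx⟩ ⟨b, t, ht, htP, hy⟩
    refine ⟨a * t + b * s, s * t, mul_mem hs ht, fun h => ((hP.mem_or_mem h).elim hsP htP), ?_⟩
    rw [map_mul, map_add, map_mul, map_mul]
    calc (x + y) * (f s * f t) = (x * f s) * f t + (y * f t) * f s := by ring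
    _ = f a * f t + f b * f s := by rw [hx, hy]
  neg_mem' := by
    rintro x ⟨a, s, hs, hsP, hx⟩
    exact ⟨-a, s, hs, hsP, by rw [map_neg, neg_mul, hx]⟩

/-- The canonical map into the regular quotient ring. -/
def toRq {R K : Type*} [CommRing R] [CommRing K] (f : R →+* K) (P : Ideal R)
    (hP : P.IsPrime) : R →+* rqSub f P hP :=
  f.codRestrict _ fun r =>
    ⟨r, 1, Submonoid.one_mem _, fun h => hP.ne_top (P.eq_top_iff_one.mpr h), by simp⟩

/-- A Manis valuation pair of K. -/
def IsManisPair {K : Type*} [CommRing K] (V : Subring K) (M : Ideal V) : Prop :=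
  M.IsPrime ∧ ∀ x : K, x ∉ V → ∃ y ∈ M, ∃ z : V, (z : K) = x * (y : K) ∧ z ∉ M

/-- The weakly Bourbaki associated primes of K/A. -/
def WBAssoc (A : Type*) [CommRing A] : Set (Ideal A) :=
  {P | ∃ a b : A, b ∈ nonZeroDivisors A ∧
    P ∈ ((Ideal.span {b}).colon (Ideal.span {a})).minimalPrimes}

/-- A regular prime P is valued if (A_(P), P·A_(P)) is a Manis valuation pair. -/
def IsValuedPrime (A : Type*) [CommRing A] (P : Ideal A) : Prop :=
  ∃ hP : P.IsPrime,
    IsManisPair (rqSub (algebraMap A (Localization (nonZeroDivisors A))) P hP)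
      (P.map (toRq (algebraMap A (Localization (nonZeroDivisors A))) P hP))

/-- A P-ring: every weakly Bourbaki associated prime of K/A is valued. -/
def PRing (A : Type*) [CommRing A] : Prop :=
  ∀ P ∈ WBAssoc A, IsValuedPrime A P

/-- Going down for a ring homomorphism. -/
def GoingDown {R S : Type*} [CommRing R] [CommRing S] (f : R →+* S) : Prop :=
  ∀ (P₁ P₂ : Ideal R), P₁.IsPrime → P₂.IsPrime → P₁ ≤ P₂ →
    ∀ Q₂ : Ideal S, Q₂.IsPrime → Q₂.comap f = P₂ →
      ∃ Q₁ : Ideal S, Q₁.IsPrime ∧ Q₁ ≤ Q₂ ∧ Q₁.comap f = P₁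

/-- A ring is perinormal if every going-down overring is flat. -/
def Perinormal (A : Type*) [CommRing A] : Prop :=
  ∀ B : Subalgebra A (Localization (nonZeroDivisors A)),
    GoingDown (algebraMap A B) → Module.Flat A B

section N
variable {A : Type*} [CommRing A]

local notation "K" => Localization (nonZeroDivisors A)
local notation "fK" => algebraMap A (Localization (nonZeroDivisors A))

lemma mem_map_toRq_iff (P : Ideal A) (hP : P.IsPrime)
    (w : rqSub (algebraMap A K) P hP) :
    w ∈ P.map (toRq (algebraMap A K) P hP) ↔
      ∃ s ∈ nonZeroDivisors A, s ∉ P ∧ ∃ p ∈ P,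
        (w : K) * algebraMap A K s = algebraMap A K p := by
  constructor
  · intro hw
    have hw' : w ∈ Submodule.span _ ((toRq fK P hP) '' (P : Set A)) := hw
    refine Submodule.span_induction ?_ ?_ ?_ ?_ hw'
    · rintro y ⟨p, hp, rfl⟩
      have hc : ((toRq fK P hP p : rqSub fK P hP) : K) = fK p := rfl
      exact ⟨1, one_mem _, fun h => hP.ne_top ((Ideal.eq_top_iff_one _).mpr h), p, hp,
        by rw [hc]; simp⟩
    · exact ⟨1, one_mem _, fun h => hP.ne_top ((Ideal.eq_top_iff_one _).mpr h), 0, zero_mem _,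
        by simp⟩
    · rintro y z - - ⟨s, hs, hsP, p, hp, hy⟩ ⟨s', hs', hs'P, p', hp', hz⟩
      refine ⟨s * s', mul_mem hs hs', fun h => (hP.mem_or_mem h).elim hsP hs'P,
        p * s' + p' * s, Ideal.add_mem _ (Ideal.mul_mem_right _ _ hp)
          (Ideal.mul_mem_right _ _ hp'), ?_⟩
      have hc : ((y + z : rqSub fK P hP) : K) = (y : K) + (z : K) := rfl
      rw [hc, map_mul, map_add, map_mul, map_mul]
      calc ((y : K) + z) * (fK s * fK s')
          = ((y : K) * fK s) * fK s' + ((z : K) * fK s') * fK s := by ring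
      _ = fK p * fK s' + fK p' * fK s := by rw [hy, hz]
    · rintro r y - ⟨s, hs, hsP, p, hp, hy⟩
      obtain ⟨a₁, s₁, hs₁, hs₁P, hr⟩ := r.2
      refine ⟨s₁ * s, mul_mem hs₁ hs, fun h => (hP.mem_or_mem h).elim hs₁P hsP,
        a₁ * p, Ideal.mul_mem_left _ _ hp, ?_⟩
      have hc : ((r • y : rqSub fK P hP) : K) = (r : K) * (y : K) := rfl
      rw [hc, map_mul, map_mul]
      calc (r : K) * (y : K) * (fK s₁ * fK s) = ((r : K) * fK s₁) * ((y : K) * fK s) := by ring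
      _ = fK a₁ * fK p := by rw [hr, hy]
  · rintro ⟨s, hs, hsP, p, hp, hws⟩
    have hu : IsUnit (fK s) := IsLocalization.map_units K ⟨s, hs⟩
    have hvs : (↑hu.unit⁻¹ : K) * fK s = 1 := hu.val_inv_mul
    have hvV : (↑hu.unit⁻¹ : K) ∈ rqSub fK P hP := ⟨1, s, hs, hsP, by rw [hvs, map_one]⟩
    have hwe : w = ⟨(↑hu.unit⁻¹ : K), hvV⟩ * toRq fK P hP p := by
      apply Subtype.ext
      have hc : ((⟨(↑hu.unit⁻¹ : K), hvV⟩ * toRq fK P hP p : rqSub fK P hP) : K)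
          = (↑hu.unit⁻¹ : K) * fK p := rfl
      rw [hc, ← hws]
      calc (w : K) = (w : K) * ((↑hu.unit⁻¹ : K) * fK s) := by rw [hvs, mul_one]
      _ = (↑hu.unit⁻¹ : K) * ((w : K) * fK s) := by ring
    rw [hwe]
    exact Ideal.mul_mem_left _ _ (Ideal.mem_map_of_mem _ hp)

lemma star_lemma (hMar : IsMarot A) (hA : PRing A)
    (B : Subalgebra A K) (hGD : GoingDown (algebraMap A B))
    (M : Ideal B) (hMp : M.IsPrime) (x : B) :
    ∃ s ∈ nonZeroDivisors A, s ∉ M.comap (algebraMap A B) ∧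
      ∃ a : A, (x : K) * algebraMap A K s = algebraMap A K a := by
  set P : Ideal A := M.comap (algebraMap A B) with hPdef
  haveI hPp : P.IsPrime := Ideal.IsPrime.comap _
  have hfinj : Function.Injective (fK) :=
    IsLocalization.injective K (le_refl (nonZeroDivisors A))
  obtain ⟨⟨a, b⟩, hxab⟩ := IsLocalization.surj (nonZeroDivisors A) (x : K)
  set I : Ideal A := (Ideal.span {(b : A)}).colon (Ideal.span {a}) with hIdef
  have hbI : (b : A) ∈ I := by
    rw [hIdef, Ideal.mem_colon_span_singleton]
    exact Ideal.mem_span_singleton.mpr ⟨a, rfl⟩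
  by_cases hcase : ∃ c ∈ I, c ∈ nonZeroDivisors A ∧ c ∉ P
  · obtain ⟨c, hcI, hcreg, hcP⟩ := hcase
    rw [hIdef, Ideal.mem_colon_span_singleton] at hcI
    obtain ⟨d, hd⟩ := Ideal.mem_span_singleton.mp hcI
    refine ⟨c, hcreg, hcP, d, ?_⟩
    have hbu : IsUnit (fK (b : A)) := IsLocalization.map_units K b
    apply hbu.mul_left_cancel
    rw [show fK (b:A) * ((x:K) * fK c) = (x : K) * fK (b : A) * fK c from by ring,
      show fK (b:A) * fK d = fK d * fK (b:A) from mul_comm _ _]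
    calc (x : K) * fK (b : A) * fK c = (x : K) * fK (b : A) * fK c := rfl
    _ = fK a * fK c := by rw [hxab]
    _ = fK (c * a) := by rw [← map_mul, mul_comm]
    _ = fK ((b : A) * d) := by rw [hd]
    _ = fK d * fK (b : A) := by rw [map_mul, mul_comm]
  · exfalso
    push_neg at hcase
    have hIP : I ≤ P := by
      conv_lhs => rw [hMar I ⟨b, hbI, b.2⟩]
      rw [Ideal.span_le]
      rintro r ⟨hrI, hrreg⟩
      exact hcase r hrI hrreg
    obtain ⟨P', hP'min, hP'P⟩ := Ideal.exists_minimalPrimes_le hIP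
    have hIP' : I ≤ P' := hP'min.1.2
    haveI hP'p : P'.IsPrime := hP'min.1.1
    obtain ⟨hP', hNp, hmanis⟩ := hA P' ⟨a, b, b.2, hP'min⟩
    have hxV : (x : K) ∉ rqSub fK P' hP' := by
      rintro ⟨a₁, s, hs, hsP', hxs⟩
      apply hsP'
      apply hIP'
      rw [hIdef, Ideal.mem_colon_span_singleton]
      refine Ideal.mem_span_singleton.mpr ⟨a₁, hfinj ?_⟩
      rw [map_mul, map_mul, ← hxab]
      calc fK s * ((x : K) * fK (b : A)) = ((x : K) * fK s) * fK (b : A) := by ring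
      _ = fK a₁ * fK (b : A) := by rw [hxs]
      _ = fK (b : A) * fK a₁ := mul_comm _ _
    obtain ⟨y, hyN, z, hzK, hzN⟩ := hmanis (x : K) hxV
    obtain ⟨s₀, hs₀reg, hs₀P', p₀, hp₀, hy⟩ :=
      (mem_map_toRq_iff (A := A) P' hP' y).mp hyN
    obtain ⟨Q, hQp, hQM, hQcomap⟩ := hGD P' P hP' hPp hP'P M hMp hPdef.symm
    obtain ⟨a₁, s₁, hs₁reg, hs₁P', hz₁⟩ := z.2
    -- key computation: a₁ * s₀ ∈ P'
    have hp₀Q : algebraMap A B p₀ ∈ Q := by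
      rw [← hQcomap] at hp₀; exact hp₀
    have hηQ : x * algebraMap A B p₀ * algebraMap A B s₁ ∈ Q :=
      Ideal.mul_mem_right _ _ (Ideal.mul_mem_left _ _ hp₀Q)
    have hη : x * algebraMap A B p₀ * algebraMap A B s₁ = algebraMap A B (a₁ * s₀) := by
      apply Subtype.ext
      have hc1 : ((x * algebraMap A B p₀ * algebraMap A B s₁ : B) : K)
          = (x : K) * fK p₀ * fK s₁ := rfl
      have hc2 : ((algebraMap A B (a₁ * s₀) : B) : K) = fK (a₁ * s₀) := rfl
      rw [hc1, hc2]
      calc (x : K) * fK p₀ * fK s₁ = (x : K) * ((y : K) * fK s₀) * fK s₁ := by rw [hy]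
      _ = ((x : K) * (y : K)) * fK s₁ * fK s₀ := by ring
      _ = (z : K) * fK s₁ * fK s₀ := by rw [hzK]
      _ = fK a₁ * fK s₀ := by rw [hz₁]
      _ = fK (a₁ * s₀) := by rw [map_mul]
    have hmem : a₁ * s₀ ∈ P' := by
      rw [← hQcomap]
      show algebraMap A B (a₁ * s₀) ∈ Q
      rw [← hη]
      exact hηQ
    have ha₁ : a₁ ∈ P' := (hP'p.mem_or_mem hmem).resolve_right hs₀P'
    exact hzN ((mem_map_toRq_iff P' hP' z).mpr ⟨s₁, hs₁reg, hs₁P', a₁, ha₁, hz₁⟩)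

end N



section Flatness
open TensorProduct

variable {A B : Type*} [CommRing A] [CommRing B] [Algebra A B]
variable (M : Ideal B) [M.IsPrime] (I : Ideal A)

/-- The canonical map `B ⊗[A] I → Bₘ ⊗[A] I`. -/
noncomputable def gMap : B ⊗[A] I →ₗ[B] Localization M.primeCompl ⊗[A] I :=
  ((AlgebraTensorModule.cancelBaseChange A B (Localization M.primeCompl)
      (Localization M.primeCompl) I).toLinearMap.restrictScalars B) ∘ₗ
    (TensorProduct.mk B (Localization M.primeCompl) (B ⊗[A] I) 1)

lemma gMap_isLocalizedModule : IsLocalizedModule M.primeCompl (gMap M I) := by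
  rw [isLocalizedModule_iff_isBaseChange M.primeCompl (Localization M.primeCompl)]
  exact (TensorProduct.isBaseChange B (B ⊗[A] I) (Localization M.primeCompl)).comp
    (IsBaseChange.ofEquiv (AlgebraTensorModule.cancelBaseChange A B
      (Localization M.primeCompl) (Localization M.primeCompl) I))

lemma gMap_square (θ : B ⊗[A] I) :
    LinearMap.lTensor (Localization M.primeCompl) I.subtype (gMap M I θ)
      = LinearMap.rTensor A
          ((Algebra.linearMap B (Localization M.primeCompl)).restrictScalars A)
          (LinearMap.lTensor B I.subtype θ) := by
  induction θ using TensorProduct.induction_on with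
  | zero => simp
  | tmul b i =>
      simp only [gMap, LinearMap.coe_comp, Function.comp_apply,
        LinearMap.coe_restrictScalars, LinearEquiv.coe_coe, TensorProduct.mk_apply,
        AlgebraTensorModule.cancelBaseChange_tmul, LinearMap.lTensor_tmul,
        LinearMap.rTensor_tmul, Algebra.linearMap_apply,
        Algebra.algebraMap_eq_smul_one]
  | add u v hu hv => rw [map_add, map_add, map_add, map_add, hu, hv]

theorem flat_of_forall_maximal
    (h : ∀ (M : Ideal B) (hm : M.IsMaximal),
      letI := hm.isPrime
      Module.Flat A (Localization M.primeCompl)) :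
    Module.Flat A B := by
  rw [Module.Flat.iff_lTensor_injective']
  intro I
  have key : ∀ θ : B ⊗[A] I, LinearMap.lTensor B I.subtype θ = 0 → θ = 0 := by
    intro θ hθ
    by_contra hne
    have hJ : (Submodule.span B {θ}).annihilator ≠ ⊤ := by
      intro htop
      apply hne
      have h1 : (1 : B) ∈ (Submodule.span B {θ}).annihilator := htop ▸ Submodule.mem_top
      simpa using Submodule.mem_annihilator_span_singleton θ 1 |>.mp h1
    obtain ⟨M, hMmax, hJM⟩ := Ideal.exists_le_maximal _ hJ
    haveI := hMmax.isPrime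
    haveI hflat : Module.Flat A (Localization M.primeCompl) := h M hMmax
    haveI hloc := gMap_isLocalizedModule M I
    have hinj : Function.Injective
        (LinearMap.lTensor (Localization M.primeCompl) I.subtype) :=
      Module.Flat.lTensor_preserves_injective_linearMap
        (M := Localization M.primeCompl) I.subtype Subtype.val_injective
    have hgθ : gMap M I θ = 0 := by
      apply hinj
      rw [gMap_square, hθ, map_zero, map_zero]
    obtain ⟨s, hs⟩ := (IsLocalizedModule.eq_iff_exists M.primeCompl (gMap M I)).mp
      (show gMap M I θ = gMap M I 0 by rw [hgθ, map_zero])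
    have hsθ : (s : B) • θ = 0 := by simpa [Submonoid.smul_def] using hs
    have : (s : B) ∈ M := hJM (Submodule.mem_annihilator_span_singleton θ _ |>.mpr hsθ)
    exact s.2 this
  intro θ₁ θ₂ hEq
  have := key (θ₁ - θ₂) (by rw [map_sub, hEq, sub_self])
  exact sub_eq_zero.mp this

end Flatness


set_option maxHeartbeats 1000000
set_option synthInstance.maxHeartbeats 400000

theorem statement14 (A : Type*) [CommRing A] (hM : IsMarot A) (hA : PRing A) :
    Perinormal A := by
  intro B hGD
  apply flat_of_forall_maximal
  intro M hm
  letI := hm.isPrime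
  haveI hTower : IsScalarTower A B (Localization M.primeCompl) :=
    IsScalarTower.of_algebraMap_eq fun a => rfl
  set P : Ideal A := M.comap (algebraMap A B) with hPdef
  haveI hPp : P.IsPrime := Ideal.IsPrime.comap _
  have hfinj : Function.Injective (algebraMap A (Localization (nonZeroDivisors A))) :=
    IsLocalization.injective _ (le_refl (nonZeroDivisors A))
  have hφinj : Function.Injective (algebraMap A B) := by
    intro u v huv
    exact hfinj (congrArg Subtype.val huv)
  have star := star_lemma hM hA B hGD M hm.isPrime
  have starB : ∀ x : B, ∃ s : A, s ∈ nonZeroDivisors A ∧ s ∉ P ∧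
      ∃ a : A, x * algebraMap A B s = algebraMap A B a := by
    intro x
    obtain ⟨s, hsreg, hsP, a, hxa⟩ := star x
    exact ⟨s, hsreg, hsP, a, Subtype.ext hxa⟩
  haveI hlocAB : IsLocalization P.primeCompl (Localization M.primeCompl) := by
    refine { map_units := ?_, surj := ?_, exists_of_eq := ?_ }
    · rintro ⟨y, hy⟩
      rw [IsScalarTower.algebraMap_apply A B (Localization M.primeCompl)]
      exact IsLocalization.map_units (Localization M.primeCompl)
        (⟨algebraMap A B y, fun hmem => hy (Ideal.mem_comap.mpr hmem)⟩ : M.primeCompl)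
    · intro z
      obtain ⟨⟨xB, t⟩, hz⟩ := IsLocalization.surj M.primeCompl z
      obtain ⟨s, hsreg, hsP, a, hxaB⟩ := starB xB
      obtain ⟨s', hs'reg, hs'P, a', hta'B⟩ := starB t.1
      have hs'M : algebraMap A B s' ∉ M := fun hmem => hs'P (Ideal.mem_comap.mpr hmem)
      have ha'P : a' ∉ P := by
        intro hmem
        rw [hPdef, Ideal.mem_comap, ← hta'B] at hmem
        rcases hm.isPrime.mem_or_mem hmem with h1 | h2
        · exact t.2 h1
        · exact hs'M h2
      have hssP : s * a' ∉ P := fun hss => (hPp.mem_or_mem hss).elim hsP ha'P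
      refine ⟨⟨a * s', ⟨s * a', hssP⟩⟩, ?_⟩
      show z * algebraMap A (Localization M.primeCompl) (s * a')
          = algebraMap A (Localization M.primeCompl) (a * s')
      rw [IsScalarTower.algebraMap_apply A B (Localization M.primeCompl),
        IsScalarTower.algebraMap_apply A B (Localization M.primeCompl),
        map_mul (algebraMap A B), map_mul (algebraMap A B)]
      calc z * algebraMap B (Localization M.primeCompl) (algebraMap A B s * algebraMap A B a')
          = z * algebraMap B (Localization M.primeCompl)
              (algebraMap A B s * ((t : B) * algebraMap A B s')) := by rw [hta'B]
      _ = (z * algebraMap B (Localization M.primeCompl) (t : B))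
            * algebraMap B (Localization M.primeCompl) (algebraMap A B s)
            * algebraMap B (Localization M.primeCompl) (algebraMap A B s') := by
          rw [map_mul, map_mul]; ring
      _ = algebraMap B (Localization M.primeCompl) xB
            * algebraMap B (Localization M.primeCompl) (algebraMap A B s)
            * algebraMap B (Localization M.primeCompl) (algebraMap A B s') := by rw [hz]
      _ = algebraMap B (Localization M.primeCompl) (xB * algebraMap A B s)
            * algebraMap B (Localization M.primeCompl) (algebraMap A B s') := by rw [map_mul]
      _ = algebraMap B (Localization M.primeCompl) (algebraMap A B a)
            * algebraMap B (Localization M.primeCompl) (algebraMap A B s') := by rw [hxaB]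
      _ = algebraMap B (Localization M.primeCompl) (algebraMap A B a * algebraMap A B s') := by
          rw [map_mul]
    · intro a₁ a₂ h
      rw [IsScalarTower.algebraMap_apply A B (Localization M.primeCompl),
        IsScalarTower.algebraMap_apply A B (Localization M.primeCompl)] at h
      obtain ⟨t, ht⟩ := IsLocalization.exists_of_eq (M := M.primeCompl) h
      obtain ⟨s', hs'reg, hs'P, a', hta'B⟩ := starB t.1
      have hs'M : algebraMap A B s' ∉ M := fun hmem => hs'P (Ideal.mem_comap.mpr hmem)
      have ha'P : a' ∉ P := by
        intro hmem
        rw [hPdef, Ideal.mem_comap, ← hta'B] at hmem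
        rcases hm.isPrime.mem_or_mem hmem with h1 | h2
        · exact t.2 h1
        · exact hs'M h2
      refine ⟨⟨a', ha'P⟩, hφinj ?_⟩
      show algebraMap A B (a' * a₁) = algebraMap A B (a' * a₂)
      rw [map_mul, map_mul, ← hta'B]
      calc (t : B) * algebraMap A B s' * algebraMap A B a₁
          = algebraMap A B s' * ((t : B) * algebraMap A B a₁) := by ring
      _ = algebraMap A B s' * ((t : B) * algebraMap A B a₂) := by rw [ht]
      _ = (t : B) * algebraMap A B s' * algebraMap A B a₂ := by ring
  exact IsLocalization.flat _ P.primeCompl
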